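/- A binary relation ⪰ on a set C satisfies cancellation if and only if ⪰ is reflexive and transitive. -/

import Mathlib

theorem exists_perm_of_ofFn_perm : ∀ {n : ℕ} {α : Type*} (a b : Fin n → α),
    List.Perm (List.ofFn a) (List.ofFn b) → ∃ σ : Equiv.Perm (Fin n), ∀ i, b i = a (σ i)
  | 0, α, a, b, _ => ⟨Equiv.refl _, fun i => i.elim0⟩
  | n + 1, α, a, b, h => by
    have hb0 : b 0 ∈ List.ofFn a := h.mem_iff.2 (by
      rw [List.ofFn_succ]; exact List.mem_cons_self)
    obtain ⟨j, hj⟩ := List.mem_ofFn.1 hb0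
    set a' : Fin (n + 1) → α := a ∘ Equiv.swap 0 j with ha'
    have hperm : List.Perm (List.ofFn a') (List.ofFn b) :=
      ((Equiv.swap 0 j).ofFn_comp_perm a).trans h
    have h0 : a' 0 = b 0 := by simp [ha', Equiv.swap_apply_left, hj]
    rw [List.ofFn_succ, List.ofFn_succ, h0] at hperm
    have htail := hperm.cons_inv
    obtain ⟨τ, hτ⟩ := exists_perm_of_ofFn_perm (fun i => a' i.succ) (fun i => b i.succ) htail
    refine ⟨(Equiv.Perm.decomposeFin.symm (0, τ)).trans (Equiv.swap 0 j), fun i => ?_⟩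
    refine Fin.cases ?_ (fun i => ?_) i
    · simp [Equiv.Perm.decomposeFin_symm_apply_zero, hj]
    · have := hτ i
      simpa [ha', Equiv.Perm.decomposeFin_symm_apply_succ] using this

/-- A binary relation `R` on a set `C` satisfies *cancellation*: for all pairs of
sequences `⟨a_1, …, a_n⟩`, `⟨b_1, …, b_n⟩` (n ≥ 1) of elements of `C` forming equal
multisets, if `a_i ⪰ b_i` for all `i ≤ n - 1`, then `b_n ⪰ a_n`. -/
def Cancellation {α : Type*} (C : Set α) (R : α → α → Prop) : Prop :=
  ∀ (n : ℕ) (a b : Fin (n + 1) → α),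
    (∀ i, a i ∈ C) → (∀ i, b i ∈ C) →
    ((List.ofFn a : Multiset α) = (List.ofFn b : Multiset α)) →
    (∀ i : Fin (n + 1), (i : ℕ) < n → R (a i) (b i)) →
    R (b (Fin.last n)) (a (Fin.last n))

/-- Cancellation holds iff the relation is reflexive and transitive on `C`. -/
theorem cancellation_iff_refl_and_trans {α : Type*} (C : Set α) (R : α → α → Prop) :
    Cancellation C R ↔
      ((∀ a ∈ C, R a a) ∧
       (∀ a ∈ C, ∀ b ∈ C, ∀ c ∈ C, R a b → R b c → R a c)) := by
  constructor
  · intro h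
    constructor
    · intro a ha
      exact h 0 (fun _ => a) (fun _ => a) (fun _ => ha) (fun _ => ha) rfl
        (fun i hi => absurd hi (Nat.not_lt_zero _))
    · intro a ha b hb c hc hab hbc
      have := h 2 ![a, b, c] ![b, c, a]
        (fun i => by fin_cases i <;> assumption)
        (fun i => by fin_cases i <;> assumption)
        (by
          have : List.Perm [a, b, c] [b, c, a] :=
            (List.Perm.swap b a [c]).trans (List.Perm.cons b (List.Perm.swap c a []))
          simpa [Multiset.coe_eq_coe] using this)
        (fun i hi => by
          fin_cases i
          · simpa using hab
          · simpa using hbc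
          · simp at hi)
      simpa using this
  · rintro ⟨hrefl, htrans⟩ n a b ha hb hms hedge
    obtain ⟨σ, hσ⟩ := exists_perm_of_ofFn_perm a b (Multiset.coe_eq_coe.1 hms)
    -- edges: for i ≠ last, R (a i) (a (σ i))
    have hedge' : ∀ i : Fin (n + 1), i ≠ Fin.last n → R (a i) (a (σ i)) := by
      intro i hi
      have hlt : (i : ℕ) < n := by
        rcases lt_or_eq_of_le (Nat.lt_succ_iff.1 i.isLt) with h' | h'
        · exact h'
        · exact absurd (Fin.ext h') hi
      have := hedge i hlt
      rwa [hσ i] at this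
    -- find minimal k > 0 with (σ ^ k) last = last
    have hex : ∃ m, 0 < m ∧ (σ ^ m) (Fin.last n) = Fin.last n :=
      ⟨orderOf σ, orderOf_pos σ, by rw [pow_orderOf_eq_one]; rfl⟩
    classical
    set k := Nat.find hex with hk
    obtain ⟨hkpos, hkfix⟩ := Nat.find_spec hex
    have hmin : ∀ m, 0 < m → m < k → (σ ^ m) (Fin.last n) ≠ Fin.last n := by
      intro m hm hmk hfix
      exact Nat.find_min hex hmk ⟨hm, hfix⟩
    have chain : ∀ j, 1 ≤ j → j ≤ k → R (a (σ (Fin.last n))) (a ((σ ^ j) (Fin.last n))) := by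
      intro j
      induction j with
      | zero => intro h1 _; omega
      | succ j ih =>
        intro _ hjk
        rcases Nat.eq_zero_or_pos j with hj0 | hjpos
        · subst hj0
          simpa using hrefl _ (ha _)
        · have hR1 := ih hjpos (le_of_lt hjk)
          have hne : (σ ^ j) (Fin.last n) ≠ Fin.last n := hmin j hjpos hjk
          have hR2 := hedge' _ hne
          have hpow : σ ((σ ^ j) (Fin.last n)) = (σ ^ (j + 1)) (Fin.last n) := by
            rw [pow_succ' σ j]; rfl
          rw [hpow] at hR2
          exact htrans _ (ha _) _ (ha _) _ (ha _) hR1 hR2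
    have := chain k hkpos le_rfl
    rw [hkfix] at this
    rw [hσ (Fin.last n)]
    exact this
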